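/- The superposition formula in components: if β = ξ + θu, β_{[1]} = ξ_{[1]} + θu_{[1]}, β_{[2]} = ξ_{[2]} + θu_{[2]}, β_{[12]} = ξ_{[12]} + θu_{[12]}, then the superfield relation β_{[12]} = β + 2(p₁+p₂)(β_{[1]}−β_{[2]})/(2(p₂−p₁) + 𝒟(β_{[1]}−β_{[2]})) is equivalent to ξ_{[12]} = ξ + 2(p₁+p₂)(ξ_{[1]}−ξ_{[2]})/D and u_{[12]} = u + 2(p₁+p₂)(u_{[1]}−u_{[2]})/D + 2(p₁+p₂)(ξ_{[1]}−ξ_{[2]})(ξ_{[1]}−ξ_{[2]})_x/D², where D = 2(p₂−p₁) + u_{[1]} − u_{[2]}. -/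

import Mathlib

/-- A supercommutative (Grassmann) algebra structure on a ring `A`: a pair of parity
predicates with even elements central and odd elements pairwise anticommuting. -/
structure SuperCommRing (A : Type*) [Ring A] where
  ev : A → Prop
  od : A → Prop
  ev_one : ev 1
  ev_add : ∀ {a b : A}, ev a → ev b → ev (a + b)
  od_add : ∀ {a b : A}, od a → od b → od (a + b)
  ev_neg : ∀ {a : A}, ev a → ev (-a)
  od_neg : ∀ {a : A}, od a → od (-a)
  ev_mul : ∀ {a b : A}, ev a → ev b → ev (a * b)
  od_mul_od : ∀ {a b : A}, od a → od b → ev (a * b)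
  ev_mul_od : ∀ {a b : A}, ev a → od b → od (a * b)
  od_mul_ev : ∀ {a b : A}, od a → ev b → od (a * b)
  ev_comm : ∀ {a : A} (b : A), ev a → a * b = b * a
  od_anticomm : ∀ {a b : A}, od a → od b → a * b = -(b * a)

/-- A pair of derivations on a supercommutative algebra: the spatial derivative `dx`
(an even derivation) and the superderivative `ds` (an odd derivation, `𝒟 = ∂_θ + θ∂_x`)
with `𝒟² = ∂_x` and the graded Leibniz rule. -/
structure SuperDer {A : Type*} [Ring A] [Algebra ℚ A] (S : SuperCommRing A) where
  dx : A → A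
  ds : A → A
  dx_add : ∀ a b : A, dx (a + b) = dx a + dx b
  dx_smul : ∀ (q : ℚ) (a : A), dx (q • a) = q • dx a
  dx_mul : ∀ a b : A, dx (a * b) = dx a * b + a * dx b
  ds_add : ∀ a b : A, ds (a + b) = ds a + ds b
  ds_smul : ∀ (q : ℚ) (a : A), ds (q • a) = q • ds a
  ds_mul_ev : ∀ a b : A, S.ev a → ds (a * b) = ds a * b + a * ds b
  ds_mul_od : ∀ a b : A, S.od a → ds (a * b) = ds a * b - a * ds b
  ds_ds : ∀ a : A, ds (ds a) = dx a
  dx_ev : ∀ a : A, S.ev a → S.ev (dx a)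
  dx_od : ∀ a : A, S.od a → S.od (dx a)
  ds_ev : ∀ a : A, S.ev a → S.od (ds a)
  ds_od : ∀ a : A, S.od a → S.ev (ds a)

section Aux
variable {A : Type*} [Ring A] [Algebra ℚ A] {S : SuperCommRing A} (D : SuperDer S)

lemma SuperDer.ds_one : D.ds 1 = 0 := by
  have h := D.ds_mul_ev 1 1 S.ev_one
  rw [one_mul, one_mul, mul_one] at h
  exact (right_eq_add.mp h)

lemma SuperDer.dx_one : D.dx 1 = 0 := by
  have h := D.dx_mul 1 1
  rw [one_mul, one_mul, mul_one] at h
  exact (right_eq_add.mp h)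

lemma SuperDer.ds_neg (a : A) : D.ds (-a) = -D.ds a := by
  rw [← neg_one_smul ℚ a, D.ds_smul, neg_one_smul]

lemma SuperDer.dx_neg (a : A) : D.dx (-a) = -D.dx a := by
  rw [← neg_one_smul ℚ a, D.dx_smul, neg_one_smul]

lemma SuperDer.ds_sub (a b : A) : D.ds (a - b) = D.ds a - D.ds b := by
  rw [sub_eq_add_neg, D.ds_add, D.ds_neg, sub_eq_add_neg]

lemma SuperDer.dx_sub (a b : A) : D.dx (a - b) = D.dx a - D.dx b := by
  rw [sub_eq_add_neg, D.dx_add, D.dx_neg, sub_eq_add_neg]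

end Aux

/-- The superposition formula in components: with `β = ξ + θu`,
`β₁ = ξ₁ + θu₁`, `β₂ = ξ₂ + θu₂`, `β₁₂ = ξ₁₂ + θu₁₂`, the superfield relation
`β₁₂ = β + 2(p₁+p₂)(β₁−β₂)·(2(p₂−p₁) + 𝒟(β₁−β₂))⁻¹` is equivalent to
`ξ₁₂ = ξ + 2(p₁+p₂)(ξ₁−ξ₂)/D` and
`u₁₂ = u + 2(p₁+p₂)(u₁−u₂)/D + 2(p₁+p₂)(ξ₁−ξ₂)(ξ₁−ξ₂)_x/D²`,
where `D = 2(p₂−p₁) + u₁ − u₂` (with two-sided inverse `Dinv`) and `G` is the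
two-sided inverse of the even invertible superfield `2(p₂−p₁) + 𝒟(β₁−β₂)`. -/
theorem super_kdv_superposition_components
    {A : Type*} [Ring A] [Algebra ℚ A] (S : SuperCommRing A) (D : SuperDer S)
    (p1 p2 : ℚ) (θ ξ ξ1 ξ2 ξ12 u u1 u2 u12 Dinv G : A)
    (hθ : S.od θ) (hξ : S.od ξ) (hξ1 : S.od ξ1) (hξ2 : S.od ξ2) (hξ12 : S.od ξ12)
    (hu : S.ev u) (hu1 : S.ev u1) (hu2 : S.ev u2) (hu12 : S.ev u12)
    (hθθ : θ * θ = 0) (hdsθ : D.ds θ = 1) (hdxθ : D.dx θ = 0)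
    -- the component fields do not depend on θ: 𝒟 = θ∂_x on them and their derivatives
    (hdsξ : D.ds ξ = θ * D.dx ξ) (hdsξ1 : D.ds ξ1 = θ * D.dx ξ1)
    (hdsξ2 : D.ds ξ2 = θ * D.dx ξ2) (hdsξ12 : D.ds ξ12 = θ * D.dx ξ12)
    (hdsu : D.ds u = θ * D.dx u) (hdsu1 : D.ds u1 = θ * D.dx u1)
    (hdsu2 : D.ds u2 = θ * D.dx u2) (hdsu12 : D.ds u12 = θ * D.dx u12)
    -- Dinv is the two-sided inverse of D = 2(p₂−p₁) + u₁ − u₂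
    (hDinv1 : ((2*(p2 - p1)) • (1:A) + u1 - u2) * Dinv = 1)
    (hDinv2 : Dinv * ((2*(p2 - p1)) • (1:A) + u1 - u2) = 1)
    -- G is the two-sided inverse of 2(p₂−p₁) + 𝒟(β₁−β₂)
    (hG1 : ((2*(p2 - p1)) • (1:A) + D.ds ((ξ1 + θ * u1) - (ξ2 + θ * u2))) * G = 1)
    (hG2 : G * ((2*(p2 - p1)) • (1:A) + D.ds ((ξ1 + θ * u1) - (ξ2 + θ * u2))) = 1) :
    ((ξ12 + θ * u12)
        = (ξ + θ * u)
          + (2*(p1 + p2)) • (((ξ1 + θ * u1) - (ξ2 + θ * u2)) * G))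
    ↔ (ξ12 = ξ + (2*(p1 + p2)) • ((ξ1 - ξ2) * Dinv)
      ∧ u12 = u + (2*(p1 + p2)) • ((u1 - u2) * Dinv)
          + (2*(p1 + p2)) • ((ξ1 - ξ2) * D.dx (ξ1 - ξ2) * (Dinv * Dinv))) := by
  -- parity facts
  have hoδξ : S.od (ξ1 - ξ2) := by
    rw [sub_eq_add_neg]; exact S.od_add hξ1 (S.od_neg hξ2)
  have heδu : S.ev (u1 - u2) := by
    rw [sub_eq_add_neg]; exact S.ev_add hu1 (S.ev_neg hu2)
  have hoρ : S.od (D.dx (ξ1 - ξ2)) := D.dx_od _ hoδξ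
  have heδξρ : S.ev ((ξ1 - ξ2) * D.dx (ξ1 - ξ2)) := S.od_mul_od hoδξ hoρ
  -- facts about the scalar e = 2(p2-p1)•1, then make it opaque
  have hec : ∀ x : A, ((2*(p2-p1):ℚ) • (1:A)) * x = x * ((2*(p2-p1):ℚ) • (1:A)) := by
    intro x; rw [smul_mul_assoc, one_mul, mul_smul_comm, mul_one]
  have hemul : ∀ x : A, ((2*(p2-p1):ℚ) • (1:A)) * x = (2*(p2-p1):ℚ) • x := by
    intro x; rw [smul_mul_assoc, one_mul]
  have hdse0 : D.ds ((2*(p2-p1):ℚ) • (1:A)) = 0 := by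
    rw [D.ds_smul, D.ds_one, smul_zero]
  have hdxe0 : D.dx ((2*(p2-p1):ℚ) • (1:A)) = 0 := by
    rw [D.dx_smul, D.dx_one, smul_zero]
  obtain ⟨e, hE⟩ : ∃ e : A, ((2*(p2-p1):ℚ) • (1:A)) = e := ⟨_, rfl⟩
  rw [hE] at hDinv1 hDinv2 hG1 hG2 hec hemul hdse0 hdxe0
  -- D0 = e + u1 - u2 is central
  have hD0c : ∀ x : A, (e + u1 - u2) * x = x * (e + u1 - u2) := by
    intro x
    have h1 := hec x
    have h2 := S.ev_comm x hu1
    have h3 := S.ev_comm x hu2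
    calc (e + u1 - u2) * x = e * x + u1 * x - u2 * x := by noncomm_ring
      _ = x * e + x * u1 - x * u2 := by rw [h1, h2, h3]
      _ = x * (e + u1 - u2) := by noncomm_ring
  -- Dinv is central
  have hDc : ∀ x : A, Dinv * x = x * Dinv := by
    intro x
    have h : Dinv * ((e + u1 - u2) * x * Dinv) = Dinv * (x * ((e + u1 - u2) * Dinv)) := by
      rw [hD0c, mul_assoc]
    rw [hDinv1, mul_one] at h
    simp only [← mul_assoc] at h
    rw [hDinv2, one_mul] at h
    exact h.symm
  have hmoveθ : ∀ z : A, Dinv * (θ * z) = θ * (Dinv * z) := by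
    intro z; rw [← mul_assoc, hDc θ, mul_assoc]
  -- solving D0 * z = w
  have hsolve : ∀ z w : A, (e + u1 - u2) * z = w → z = Dinv * w := by
    intro z w h
    calc z = (Dinv * (e + u1 - u2)) * z := by rw [hDinv2, one_mul]
      _ = Dinv * ((e + u1 - u2) * z) := mul_assoc _ _ _
      _ = Dinv * w := by rw [h]
  -- Leibniz for D0 * z
  have hdsD0mul : ∀ z : A, D.ds ((e + u1 - u2) * z)
      = (θ * D.dx u1 - θ * D.dx u2) * z + (e + u1 - u2) * D.ds z := by
    intro z
    have hsplit : (e + u1 - u2) * z = e * z + (u1 * z - u2 * z) := by noncomm_ring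
    rw [hsplit, D.ds_add, D.ds_sub, D.ds_mul_ev _ _ hu1, D.ds_mul_ev _ _ hu2,
      hemul z, D.ds_smul, ← hemul, hdsu1, hdsu2]
    noncomm_ring
  have hdxD0mul : ∀ z : A, D.dx ((e + u1 - u2) * z)
      = (D.dx u1 - D.dx u2) * z + (e + u1 - u2) * D.dx z := by
    intro z
    rw [D.dx_mul, D.dx_sub, D.dx_add, hdxe0]
    noncomm_ring
  -- ds and dx of Dinv
  have hdxDinv : D.dx Dinv = Dinv * -((D.dx u1 - D.dx u2) * Dinv) := by
    apply hsolve
    have h0 : D.dx ((e + u1 - u2) * Dinv) = 0 := by rw [hDinv1, D.dx_one]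
    rw [hdxD0mul] at h0
    exact eq_neg_of_add_eq_zero_right h0
  have hdsDinv : D.ds Dinv = θ * D.dx Dinv := by
    have h0 : D.ds ((e + u1 - u2) * Dinv) = 0 := by rw [hDinv1, D.ds_one]
    rw [hdsD0mul] at h0
    have h1 := hsolve _ _ (eq_neg_of_add_eq_zero_right h0)
    rw [h1, hdxDinv, mul_neg, mul_neg, ← mul_sub θ, mul_assoc θ, hmoveθ, mul_neg]
  -- ds and dx of Q = Dinv * Dinv
  have hDQ : (e + u1 - u2) * (Dinv * Dinv) = Dinv := by
    rw [← mul_assoc, hDinv1, one_mul]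
  have hdxQ : D.dx (Dinv * Dinv)
      = Dinv * (D.dx Dinv - (D.dx u1 - D.dx u2) * (Dinv * Dinv)) := by
    apply hsolve
    have h0 := congrArg D.dx hDQ
    rw [hdxD0mul] at h0
    exact eq_sub_of_add_eq' h0
  have hdsQ : D.ds (Dinv * Dinv) = θ * D.dx (Dinv * Dinv) := by
    have h0 := congrArg D.ds hDQ
    rw [hdsD0mul] at h0
    have h1 := hsolve _ _ (eq_sub_of_add_eq' h0)
    rw [h1, hdxQ, hdsDinv, mul_sub, mul_sub, ← mul_sub θ, mul_assoc θ, hmoveθ, hmoveθ,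
      ← mul_sub θ]
  -- the property "independent of θ" and its closure rules
  have Padd : ∀ a b : A, D.ds a = θ * D.dx a → D.ds b = θ * D.dx b →
      D.ds (a + b) = θ * D.dx (a + b) := by
    intro a b ha hb; rw [D.ds_add, D.dx_add, mul_add, ha, hb]
  have Psub : ∀ a b : A, D.ds a = θ * D.dx a → D.ds b = θ * D.dx b →
      D.ds (a - b) = θ * D.dx (a - b) := by
    intro a b ha hb; rw [D.ds_sub, D.dx_sub, mul_sub, ha, hb]
  have Psmul : ∀ (q : ℚ) (a : A), D.ds a = θ * D.dx a →
      D.ds (q • a) = θ * D.dx (q • a) := by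
    intro q a ha; rw [D.ds_smul, D.dx_smul, ha, mul_smul_comm]
  have PmulE : ∀ a b : A, S.ev a → D.ds a = θ * D.dx a → D.ds b = θ * D.dx b →
      D.ds (a * b) = θ * D.dx (a * b) := by
    intro a b he ha hb
    rw [D.ds_mul_ev _ _ he, ha, hb, D.dx_mul, mul_add, mul_assoc,
      ← mul_assoc a θ, S.ev_comm θ he, mul_assoc]
  have PmulO : ∀ a b : A, S.od a → D.ds a = θ * D.dx a → D.ds b = θ * D.dx b →
      D.ds (a * b) = θ * D.dx (a * b) := by
    intro a b ho ha hb
    rw [D.ds_mul_od _ _ ho, ha, hb, D.dx_mul, mul_add, mul_assoc,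
      ← mul_assoc a θ, S.od_anticomm ho hθ, neg_mul, sub_neg_eq_add, mul_assoc]
  have Pδξ : D.ds (ξ1 - ξ2) = θ * D.dx (ξ1 - ξ2) := Psub _ _ hdsξ1 hdsξ2
  have Pδu : D.ds (u1 - u2) = θ * D.dx (u1 - u2) := Psub _ _ hdsu1 hdsu2
  have Pρ : D.ds (D.dx (ξ1 - ξ2)) = θ * D.dx (D.dx (ξ1 - ξ2)) := by
    calc D.ds (D.dx (ξ1 - ξ2)) = D.ds (D.ds (D.ds (ξ1 - ξ2))) :=
        (congrArg D.ds (D.ds_ds _)).symm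
      _ = D.dx (D.ds (ξ1 - ξ2)) := D.ds_ds _
      _ = D.dx (θ * D.dx (ξ1 - ξ2)) := by rw [Pδξ]
      _ = θ * D.dx (D.dx (ξ1 - ξ2)) := by rw [D.dx_mul, hdxθ, zero_mul, zero_add]
  -- ds of the superfield difference
  have hdsβ : D.ds ((ξ1 + θ * u1) - (ξ2 + θ * u2)) = (u1 - u2) + θ * D.dx (ξ1 - ξ2) := by
    rw [D.ds_sub, D.ds_add, D.ds_add, D.ds_mul_od θ u1 hθ, D.ds_mul_od θ u2 hθ, hdsθ,
      one_mul, one_mul, hdsu1, hdsu2, hdsξ1, hdsξ2]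
    simp only [← mul_assoc, hθθ, zero_mul, sub_zero]
    rw [D.dx_sub, mul_sub]
    noncomm_ring
  rw [hdsβ] at hG1 hG2
  have hMeq : e + ((u1 - u2) + θ * D.dx (ξ1 - ξ2))
      = (e + u1 - u2) + θ * D.dx (ξ1 - ξ2) := by noncomm_ring
  rw [hMeq] at hG1 hG2
  -- the explicit inverse
  have e1 : (e + u1 - u2) * (θ * D.dx (ξ1 - ξ2) * (Dinv * Dinv))
      = θ * D.dx (ξ1 - ξ2) * Dinv := by
    rw [hD0c, mul_assoc (θ * D.dx (ξ1 - ξ2)), mul_assoc Dinv, hDinv2, mul_one]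
  have e2 : (θ * D.dx (ξ1 - ξ2)) * (θ * D.dx (ξ1 - ξ2) * (Dinv * Dinv)) = 0 := by
    calc (θ * D.dx (ξ1 - ξ2)) * (θ * D.dx (ξ1 - ξ2) * (Dinv * Dinv))
        = (θ * (D.dx (ξ1 - ξ2) * θ)) * (D.dx (ξ1 - ξ2) * (Dinv * Dinv)) := by noncomm_ring
      _ = 0 := by
            rw [S.od_anticomm hoρ hθ]
            simp only [mul_neg, neg_mul, ← mul_assoc, hθθ, zero_mul, neg_zero]
  have hkey : ((e + u1 - u2) + θ * D.dx (ξ1 - ξ2))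
      * (Dinv - θ * D.dx (ξ1 - ξ2) * (Dinv * Dinv)) = 1 := by
    calc ((e + u1 - u2) + θ * D.dx (ξ1 - ξ2))
        * (Dinv - θ * D.dx (ξ1 - ξ2) * (Dinv * Dinv))
        = (e + u1 - u2) * Dinv
          - (e + u1 - u2) * (θ * D.dx (ξ1 - ξ2) * (Dinv * Dinv))
          + ((θ * D.dx (ξ1 - ξ2)) * Dinv
            - (θ * D.dx (ξ1 - ξ2)) * (θ * D.dx (ξ1 - ξ2) * (Dinv * Dinv))) := by
          noncomm_ring
      _ = 1 := by rw [hDinv1, e1, e2]; noncomm_ring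
  have hGval : G = Dinv - θ * D.dx (ξ1 - ξ2) * (Dinv * Dinv) := by
    calc G = G * (((e + u1 - u2) + θ * D.dx (ξ1 - ξ2))
        * (Dinv - θ * D.dx (ξ1 - ξ2) * (Dinv * Dinv))) := by rw [hkey, mul_one]
      _ = (G * ((e + u1 - u2) + θ * D.dx (ξ1 - ξ2)))
          * (Dinv - θ * D.dx (ξ1 - ξ2) * (Dinv * Dinv)) := (mul_assoc _ _ _).symm
      _ = Dinv - θ * D.dx (ξ1 - ξ2) * (Dinv * Dinv) := by rw [hG2, one_mul]
  -- expand the product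
  have f1 : ((ξ1 - ξ2) * θ) * (D.dx (ξ1 - ξ2) * (Dinv * Dinv))
      = -(θ * ((ξ1 - ξ2) * D.dx (ξ1 - ξ2) * (Dinv * Dinv))) := by
    rw [S.od_anticomm hoδξ hθ]; noncomm_ring
  have f2 : (θ * ((u1 - u2) * θ)) * (D.dx (ξ1 - ξ2) * (Dinv * Dinv)) = 0 := by
    rw [S.ev_comm θ heδu]
    simp only [← mul_assoc, hθθ, zero_mul]
  have hprod : ((ξ1 + θ * u1) - (ξ2 + θ * u2)) * G
      = (ξ1 - ξ2) * Dinv + θ * ((u1 - u2) * Dinv)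
        + θ * ((ξ1 - ξ2) * D.dx (ξ1 - ξ2) * (Dinv * Dinv)) := by
    rw [hGval]
    calc ((ξ1 + θ * u1) - (ξ2 + θ * u2)) * (Dinv - θ * D.dx (ξ1 - ξ2) * (Dinv * Dinv))
        = (ξ1 - ξ2) * Dinv + θ * ((u1 - u2) * Dinv)
          - ((ξ1 - ξ2) * θ) * (D.dx (ξ1 - ξ2) * (Dinv * Dinv))
          - (θ * ((u1 - u2) * θ)) * (D.dx (ξ1 - ξ2) * (Dinv * Dinv)) := by noncomm_ring
      _ = _ := by rw [f1, f2]; noncomm_ring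
  have main_eq : (ξ + θ * u) + (2*(p1 + p2)) • (((ξ1 + θ * u1) - (ξ2 + θ * u2)) * G)
      = (ξ + (2*(p1 + p2)) • ((ξ1 - ξ2) * Dinv))
        + θ * (u + (2*(p1 + p2)) • ((u1 - u2) * Dinv)
          + (2*(p1 + p2)) • ((ξ1 - ξ2) * D.dx (ξ1 - ξ2) * (Dinv * Dinv))) := by
    rw [hprod]
    simp only [smul_add, mul_add, mul_smul_comm]
    abel
  rw [main_eq]
  -- P facts for the right-hand components
  have PX : D.ds (ξ + (2*(p1 + p2)) • ((ξ1 - ξ2) * Dinv))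
      = θ * D.dx (ξ + (2*(p1 + p2)) • ((ξ1 - ξ2) * Dinv)) :=
    Padd _ _ hdsξ (Psmul _ _ (PmulO _ _ hoδξ Pδξ hdsDinv))
  have PY : D.ds (u + (2*(p1 + p2)) • ((u1 - u2) * Dinv)
        + (2*(p1 + p2)) • ((ξ1 - ξ2) * D.dx (ξ1 - ξ2) * (Dinv * Dinv)))
      = θ * D.dx (u + (2*(p1 + p2)) • ((u1 - u2) * Dinv)
        + (2*(p1 + p2)) • ((ξ1 - ξ2) * D.dx (ξ1 - ξ2) * (Dinv * Dinv))) :=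
    Padd _ _ (Padd _ _ hdsu (Psmul _ _ (PmulE _ _ heδu Pδu hdsDinv)))
      (Psmul _ _ (PmulE _ _ heδξρ (PmulO _ _ hoδξ Pδξ Pρ) hdsQ))
  -- extraction of components
  have extract : ∀ x y x' y' : A, D.ds x = θ * D.dx x → D.ds y = θ * D.dx y →
      D.ds x' = θ * D.dx x' → D.ds y' = θ * D.dx y' →
      x + θ * y = x' + θ * y' → x = x' ∧ y = y' := by
    intro x y x' y' px py px' py' h
    have h2 := congrArg D.ds h
    rw [D.ds_add, D.ds_add, D.ds_mul_od θ y hθ, D.ds_mul_od θ y' hθ, hdsθ, one_mul,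
      one_mul, px, px', py, py', ← mul_assoc, ← mul_assoc, hθθ, zero_mul, zero_mul,
      sub_zero, sub_zero] at h2
    have h3 := congrArg (fun z => θ * z) h2
    simp only [mul_add, ← mul_assoc, hθθ, zero_mul, zero_add] at h3
    rw [← h3] at h
    have hx := add_right_cancel h
    refine ⟨hx, ?_⟩
    rw [hx] at h2
    exact add_left_cancel h2
  constructor
  · intro h
    exact extract _ _ _ _ hdsξ12 hdsu12 PX PY h
  · rintro ⟨h1, h2⟩
    rw [h1, h2]
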